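/- Let N+ be a rooted binary phylogenetic network on a taxon set X with |X| ≥ 3. Then every 3-element subset of X determines a blob of N+. -/

import Mathlib

/-!
# Common framework

Finite directed multigraphs, undirected connectivity, numbers of connected
components, cut edges, subgraphs, blobs, blobs determined by leaf sets,
B-quartets, and quartets displayed via cut-edge separation.

A *network* is modelled as a finite directed multigraph (edge directions are
simply ignored for the undirected notions of connectivity, cut edges and
blobs).
-/

/-- A finite directed multigraph: finite types of nodes and of edges, with
source and target maps. -/
structure MDigraph where
  V : Type
  E : Type
  finV : Finite V
  finE : Finite E
  src : E → V
  tgt : E → V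

attribute [instance] MDigraph.finV MDigraph.finE

namespace MDigraph

section Basic

variable (G : MDigraph)

/-- One undirected step between `u` and `v` along an edge from the set `F`. -/
def Step (F : Set G.E) (u v : G.V) : Prop :=
  ∃ e ∈ F, (G.src e = u ∧ G.tgt e = v) ∨ (G.src e = v ∧ G.tgt e = u)

/-- Undirected reachability (an undirected path) using only edges in `F`. -/
def Conn (F : Set G.E) (u v : G.V) : Prop :=
  Relation.ReflTransGen (G.Step F) u v

/-- One directed step from `u` to `v` along an edge from the set `F`. -/
def DStep (F : Set G.E) (u v : G.V) : Prop :=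
  ∃ e ∈ F, G.src e = u ∧ G.tgt e = v

/-- Directed reachability (a directed path) using only edges in `F`. -/
def DConn (F : Set G.E) (u v : G.V) : Prop :=
  Relation.ReflTransGen (G.DStep F) u v

/-- `u` is above (ancestral to) `v`: there is a directed path from `u` to `v`. -/
def Above (u v : G.V) : Prop := G.DConn Set.univ u v

/-- In-degree of a node. -/
noncomputable def inDeg (v : G.V) : ℕ := Nat.card {e : G.E // G.tgt e = v}

/-- Out-degree of a node. -/
noncomputable def outDeg (v : G.V) : ℕ := Nat.card {e : G.E // G.src e = v}

/-- Undirected degree of a node (a loop counts twice). -/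
noncomputable def degree (v : G.V) : ℕ := G.inDeg v + G.outDeg v

/-- The number of connected components of the graph with node set `W` and edge
set the restriction to `W` of `F` (two nodes of `W` lie in the same connected
component iff they are joined by an undirected path). -/
noncomputable def numComponents (W : Set G.V) (F : Set G.E) : ℕ :=
  Nat.card (Quot (fun u v : W => G.Step {e ∈ F | G.src e ∈ W ∧ G.tgt e ∈ W} u.1 v.1))

/-- `v` lies on every directed path from `u` to `w`: there is no directed path
from `u` to `w` all of whose nodes avoid `v`. -/
def OnEveryPath (v u w : G.V) : Prop :=
  ¬ (u ≠ v ∧ w ≠ v ∧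
      Relation.ReflTransGen (fun a b => G.DStep Set.univ a b ∧ a ≠ v ∧ b ≠ v) u w)

end Basic

/-- A subgraph (subnetwork): a set of nodes together with a set of edges
joining them. -/
structure Subgraph (G : MDigraph) where
  verts : Set G.V
  edges : Set G.E
  src_mem : ∀ e ∈ edges, G.src e ∈ verts
  tgt_mem : ∀ e ∈ edges, G.tgt e ∈ verts

/-- The whole graph, as a subgraph of itself. -/
def top (G : MDigraph) : Subgraph G :=
  ⟨Set.univ, Set.univ, fun _ _ => Set.mem_univ _, fun _ _ => Set.mem_univ _⟩

namespace Subgraph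

variable {G : MDigraph}

/-- Containment of subgraphs. -/
def le (H K : Subgraph G) : Prop := H.verts ⊆ K.verts ∧ H.edges ⊆ K.edges

/-- The subgraph `H` is connected. -/
def IsConnected (H : Subgraph G) : Prop :=
  H.verts.Nonempty ∧ ∀ u ∈ H.verts, ∀ v ∈ H.verts, G.Conn H.edges u v

/-- Delete an edge from a subgraph. -/
def deleteEdge (H : Subgraph G) (e : G.E) : Subgraph G :=
  ⟨H.verts, H.edges \ {e}, fun e' he' => H.src_mem e' he'.1,
    fun e' he' => H.tgt_mem e' he'.1⟩

/-- The number of connected components of a subgraph. -/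
noncomputable def numComponents (H : Subgraph G) : ℕ :=
  G.numComponents H.verts H.edges

/-- `e` is a cut edge of the (sub)graph `H`: deleting it increases the number
of connected components. -/
def IsCutEdge (H : Subgraph G) (e : G.E) : Prop :=
  e ∈ H.edges ∧ H.numComponents < (H.deleteEdge e).numComponents

end Subgraph

variable {G : MDigraph}

/-- `B` is a blob of the network `H`: a maximal connected subnetwork of `H`
having no cut edges.  (A blob is *trivial* if it consists of a single node.) -/
def IsBlobIn (H B : Subgraph G) : Prop :=
  B.le H ∧ B.IsConnected ∧ (∀ e, ¬ B.IsCutEdge e) ∧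
    ∀ B' : Subgraph G, B'.le H → B'.IsConnected → (∀ e, ¬ B'.IsCutEdge e) →
      B.le B' → B'.le B

/-- `e` is a cut edge of the network `H` incident to the blob `B`: exactly one
of its endpoints is a node of `B`. -/
def IncidentCut (H B : Subgraph G) (e : G.E) : Prop :=
  H.IsCutEdge e ∧ Xor' (G.src e ∈ B.verts) (G.tgt e ∈ B.verts)

/-- The blob `B` of the network `H` is determined by the set `S` of leaf
labels: deletion of the cut edges of `H` incident to `B` leaves the nodes
labelled by the elements of `S` in distinct connected components. -/
def DeterminesIn {X : Type} (H B : Subgraph G) (leaf : X → G.V) (S : Set X) : Prop :=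
  ∀ s ∈ S, ∀ t ∈ S, s ≠ t →
    ¬ G.Conn {e ∈ H.edges | ¬ IncidentCut H B e} (leaf s) (leaf t)

/-- Four taxa form a B-quartet on the network `H`: some blob of `H` is
determined by them. -/
def BQuartetIn {X : Type} (H : Subgraph G) (leaf : X → G.V) (a b c d : X) : Prop :=
  ∃ B : Subgraph G, IsBlobIn H B ∧ DeterminesIn H B leaf ({a, b, c, d} : Set X)

/-- Some cut edge of `H` separates the taxa `p, q` from the taxa `r, s`: after
its deletion `p, q` lie in one connected component and `r, s` in another.  For
a 4-taxon set `{p,q,r,s}` this says exactly that the (reduced unrooted) tree of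
blobs of `H` displays the resolved quartet `pq|rs` (the edges of the tree of
blobs correspond exactly to the cut edges of the network, and suppressing
degree-2 nodes or contracting blobs does not affect which taxa a cut edge
separates). -/
def CutSep {X : Type} (H : Subgraph G) (leaf : X → G.V) (p q r s : X) : Prop :=
  ∃ e, H.IsCutEdge e ∧
    G.Conn (H.edges \ {e}) (leaf p) (leaf q) ∧
    G.Conn (H.edges \ {e}) (leaf r) (leaf s) ∧
    ¬ G.Conn (H.edges \ {e}) (leaf p) (leaf r)

end MDigraph
open MDigraph in
/-- A rooted binary phylogenetic network on the taxon set `X`: a connected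
directed acyclic graph whose node set consists of a root (in-degree 0,
out-degree 2), leaves (in-degree 1, out-degree 0) bijectively labelled by `X`,
tree nodes (in-degree 1, out-degree 2) and hybrid nodes (in-degree 2,
out-degree 1). -/
structure PhyloNetwork (X : Type) extends MDigraph where
  root : toMDigraph.V
  leaf : X → toMDigraph.V
  leaf_inj : Function.Injective leaf
  root_in : toMDigraph.inDeg root = 0
  root_out : toMDigraph.outDeg root = 2
  leaf_in : ∀ x, toMDigraph.inDeg (leaf x) = 1
  leaf_out : ∀ x, toMDigraph.outDeg (leaf x) = 0
  internal : ∀ v, v ≠ root → (∀ x, v ≠ leaf x) →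
      (toMDigraph.inDeg v = 1 ∧ toMDigraph.outDeg v = 2) ∨
      (toMDigraph.inDeg v = 2 ∧ toMDigraph.outDeg v = 1)
  acyclic : ∀ v, ¬ Relation.TransGen (toMDigraph.DStep Set.univ) v v
  conn : ∀ u v, toMDigraph.Conn Set.univ u v

namespace PhyloNetwork

open MDigraph

variable {X : Type} (N : PhyloNetwork X)

/-- The subnetwork of `N⁺` consisting of all nodes and edges ancestral to at
least one taxon in `Y`.  Since suppressing nodes of in- and out-degree 1
affects neither blobs, nor cut edges, nor which sets of taxa they separate,
this subnetwork faithfully represents the induced network `N⁺_Y`. -/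
def inducedSub (Y : Set X) : Subgraph N.toMDigraph where
  verts := {v | ∃ y ∈ Y, N.toMDigraph.Above v (N.leaf y)}
  edges := {e | ∃ y ∈ Y, N.toMDigraph.Above (N.toMDigraph.tgt e) (N.leaf y)}
  src_mem := by
    rintro e ⟨y, hy, h⟩
    exact ⟨y, hy, Relation.ReflTransGen.head ⟨e, Set.mem_univ e, rfl, rfl⟩ h⟩
  tgt_mem := by
    rintro e ⟨y, hy, h⟩
    exact ⟨y, hy, h⟩

/-- `v` is a stable ancestor of the leaves: it is ancestral to every leaf and
lies on every directed path from the root to any leaf. -/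
def IsStableAncestor (v : N.toMDigraph.V) : Prop :=
  (∀ x, N.toMDigraph.Above v (N.leaf x)) ∧
  ∀ x, N.toMDigraph.OnEveryPath v N.root (N.leaf x)

/-- `v` is the lowest stable ancestor (LSA) of the network: a stable ancestor
below all stable ancestors. -/
def IsLSA (v : N.toMDigraph.V) : Prop :=
  N.IsStableAncestor v ∧ ∀ u, N.IsStableAncestor u → N.toMDigraph.Above u v

/-- The number of cut edges of `N⁺` incident to the blob `B`. -/
noncomputable def blobDeg (B : Subgraph N.toMDigraph) : ℕ :=
  Nat.card {e : N.toMDigraph.E // IncidentCut (top N.toMDigraph) B e}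

/-- `B` is an `m`-blob of the rooted network `N⁺`: if the root is not in `B`
then `B` has exactly `m` incident cut edges, while if the root is in `B` then
`B` has exactly `m - 1` incident cut edges. -/
def IsMBlob (B : Subgraph N.toMDigraph) (m : ℕ) : Prop :=
  IsBlobIn (top N.toMDigraph) B ∧
    ((N.root ∈ B.verts ∧ m = N.blobDeg B + 1) ∨ (N.root ∉ B.verts ∧ m = N.blobDeg B))

end PhyloNetwork

open MDigraph

section Stmt9Aux

open MDigraph Relation

namespace Stmt9

lemma mem_ds {α : Type*} {s : Set α} {a b : α} (h1 : a ∈ s) (h2 : a ≠ b) : a ∈ s \ {b} :=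
  ⟨h1, fun h => h2 h⟩

variable {G : MDigraph}

lemma step_symm {F : Set G.E} {u v : G.V} (h : G.Step F u v) : G.Step F v u := by
  obtain ⟨e, he, h⟩ := h; exact ⟨e, he, h.symm⟩

lemma conn_refl {F : Set G.E} {u : G.V} : G.Conn F u u := ReflTransGen.refl

lemma conn_symm {F : Set G.E} {u v : G.V} (h : G.Conn F u v) : G.Conn F v u := by
  induction h with
  | refl => exact ReflTransGen.refl
  | tail _ h2 ih => exact ReflTransGen.head (step_symm h2) ih

lemma conn_mono {F F' : Set G.E} (hFF : F ⊆ F') {u v : G.V} (h : G.Conn F u v) :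
    G.Conn F' u v := by
  induction h with
  | refl => exact ReflTransGen.refl
  | tail _ hs ih => obtain ⟨e, he, hh⟩ := hs; exact ih.tail ⟨e, hFF he, hh⟩

/-! ### Walks as lists of edges -/

def Walk (G : MDigraph) (F : Set G.E) : G.V → List G.E → G.V → Prop
  | u, [], w => u = w
  | u, e :: l, w =>
      e ∈ F ∧ ((G.src e = u ∧ Walk G F (G.tgt e) l w) ∨ (G.tgt e = u ∧ Walk G F (G.src e) l w))

lemma walk_conn {F : Set G.E} : ∀ {l : List G.E} {u w : G.V}, Walk G F u l w → G.Conn F u w := by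
  intro l
  induction l with
  | nil => intro u w h; cases h; exact conn_refl
  | cons e l ih =>
    intro u w h
    obtain ⟨he, h⟩ := h
    rcases h with ⟨hs, hw⟩ | ⟨hs, hw⟩
    · exact ReflTransGen.head ⟨e, he, Or.inl ⟨hs, rfl⟩⟩ (ih hw)
    · exact ReflTransGen.head ⟨e, he, Or.inr ⟨rfl, hs⟩⟩ (ih hw)

lemma walk_append {F : Set G.E} : ∀ {l₁ l₂ : List G.E} {u v w : G.V},
    Walk G F u l₁ v → Walk G F v l₂ w → Walk G F u (l₁ ++ l₂) w := by
  intro l₁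
  induction l₁ with
  | nil => intro l₂ u v w h1 h2; cases h1; exact h2
  | cons e l ih =>
    intro l₂ u v w h1 h2
    obtain ⟨he, h1⟩ := h1
    refine ⟨he, ?_⟩
    rcases h1 with ⟨hs, hw⟩ | ⟨hs, hw⟩
    · exact Or.inl ⟨hs, ih hw h2⟩
    · exact Or.inr ⟨hs, ih hw h2⟩

lemma conn_walk {F : Set G.E} {u w : G.V} (h : G.Conn F u w) : ∃ l, Walk G F u l w := by
  induction h with
  | refl => exact ⟨[], rfl⟩
  | tail _ h2 ih =>
    obtain ⟨l, hl⟩ := ih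
    obtain ⟨e, he, hor⟩ := h2
    refine ⟨l ++ [e], walk_append hl ?_⟩
    rcases hor with ⟨hs, ht⟩ | ⟨hs, ht⟩
    · exact ⟨he, Or.inl ⟨hs, ht⟩⟩
    · exact ⟨he, Or.inr ⟨ht, hs⟩⟩

lemma walk_mem {F : Set G.E} : ∀ {l : List G.E} {u w : G.V},
    Walk G F u l w → ∀ e ∈ l, e ∈ F := by
  intro l
  induction l with
  | nil => intro u w _ e he; simp at he
  | cons e' l ih =>
    intro u w h e he
    obtain ⟨he', hor⟩ := h
    rcases List.mem_cons.mp he with rfl | he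
    · exact he'
    · rcases hor with ⟨_, hw⟩ | ⟨_, hw⟩ <;> exact ih hw e he

lemma walk_sub {F F' : Set G.E} : ∀ {l : List G.E} {u w : G.V},
    Walk G F u l w → (∀ e ∈ l, e ∈ F') → Walk G F' u l w := by
  intro l
  induction l with
  | nil => intro u w h _; exact h
  | cons e l ih =>
    intro u w h hsub
    obtain ⟨he, hor⟩ := h
    refine ⟨hsub e List.mem_cons_self, ?_⟩
    rcases hor with ⟨hs, hw⟩ | ⟨hs, hw⟩
    · exact Or.inl ⟨hs, ih hw fun f hf => hsub f (List.mem_cons_of_mem _ hf)⟩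
    · exact Or.inr ⟨hs, ih hw fun f hf => hsub f (List.mem_cons_of_mem _ hf)⟩

lemma walk_split {F : Set G.E} {f : G.E} : ∀ {l : List G.E} {u w : G.V},
    Walk G F u l w → f ∈ l →
    ∃ l₁ l₂ x, l = l₁ ++ f :: l₂ ∧ f ∉ l₁ ∧ Walk G F u l₁ x ∧
      ((G.src f = x ∧ Walk G F (G.tgt f) l₂ w) ∨ (G.tgt f = x ∧ Walk G F (G.src f) l₂ w)) := by
  intro l
  induction l with
  | nil => intro u w _ hf; simp at hf
  | cons e l ih =>
    intro u w h hf
    obtain ⟨he, hor⟩ := h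
    by_cases hef : e = f
    · subst hef
      refine ⟨[], l, u, rfl, List.not_mem_nil, rfl, ?_⟩
      rcases hor with ⟨hs, hw⟩ | ⟨hs, hw⟩
      · exact Or.inl ⟨hs, hw⟩
      · exact Or.inr ⟨hs, hw⟩
    · have hf' : f ∈ l := by
        rcases List.mem_cons.mp hf with h' | h'
        · exact absurd h'.symm hef
        · exact h'
      rcases hor with ⟨hs, hw⟩ | ⟨hs, hw⟩
      · obtain ⟨l₁, l₂, x, heq, hnm, hw1, hor2⟩ := ih hw hf'
        refine ⟨e :: l₁, l₂, x, by rw [heq]; rfl, ?_, ⟨he, Or.inl ⟨hs, hw1⟩⟩, hor2⟩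
        simp only [List.mem_cons, not_or]
        exact ⟨fun h' => hef h'.symm, hnm⟩
      · obtain ⟨l₁, l₂, x, heq, hnm, hw1, hor2⟩ := ih hw hf'
        refine ⟨e :: l₁, l₂, x, by rw [heq]; rfl, ?_, ⟨he, Or.inr ⟨hs, hw1⟩⟩, hor2⟩
        simp only [List.mem_cons, not_or]
        exact ⟨fun h' => hef h'.symm, hnm⟩

lemma exists_min_walk {F : Set G.E} {u w : G.V} (h : ∃ l, Walk G F u l w) :
    ∃ l, Walk G F u l w ∧ ∀ l', Walk G F u l' w → l.length ≤ l'.length := by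
  classical
  obtain ⟨l₀, hl₀⟩ := h
  have hP : ∃ n, ∃ l, Walk G F u l w ∧ l.length = n := ⟨l₀.length, l₀, hl₀, rfl⟩
  obtain ⟨l, hl, hlen⟩ := Nat.find_spec hP
  refine ⟨l, hl, fun l' hl' => ?_⟩
  have h2 := Nat.find_min' hP ⟨l', hl', rfl⟩
  omega

lemma min_walk_once {F : Set G.E} {l : List G.E} {u w : G.V} {f : G.E}
    (hw : Walk G F u l w)
    (hmin : ∀ l', Walk G F u l' w → l.length ≤ l'.length) (hf : f ∈ l) :
    ∃ l₁ l₂ x, f ∉ l₁ ∧ f ∉ l₂ ∧ Walk G F u l₁ x ∧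
      ((G.src f = x ∧ Walk G F (G.tgt f) l₂ w) ∨ (G.tgt f = x ∧ Walk G F (G.src f) l₂ w)) := by
  have hfF : f ∈ F := walk_mem hw f hf
  obtain ⟨l₁, l₂, x, heq, h1, hw1, hor⟩ := walk_split hw hf
  refine ⟨l₁, l₂, x, h1, ?_, hw1, hor⟩
  by_contra hf2
  rcases hor with ⟨hs, hw2⟩ | ⟨hs, hw2⟩
  · obtain ⟨l₃, l₄, x', heq2, _, hw3, hor2⟩ := walk_split hw2 hf2
    rcases hor2 with ⟨hs', hw4⟩ | ⟨hs', hw4⟩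
    · have hnew : Walk G F u (l₁ ++ f :: l₄) w := walk_append hw1 ⟨hfF, Or.inl ⟨hs, hw4⟩⟩
      have hlen := hmin _ hnew
      rw [heq, heq2] at hlen
      simp only [List.length_append, List.length_cons] at hlen
      omega
    · have hnew : Walk G F u (l₁ ++ l₄) w := walk_append hw1 (hs ▸ hw4)
      have hlen := hmin _ hnew
      rw [heq, heq2] at hlen
      simp only [List.length_append, List.length_cons] at hlen
      omega
  · obtain ⟨l₃, l₄, x', heq2, _, hw3, hor2⟩ := walk_split hw2 hf2
    rcases hor2 with ⟨hs', hw4⟩ | ⟨hs', hw4⟩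
    · have hnew : Walk G F u (l₁ ++ l₄) w := walk_append hw1 (hs ▸ hw4)
      have hlen := hmin _ hnew
      rw [heq, heq2] at hlen
      simp only [List.length_append, List.length_cons] at hlen
      omega
    · have hnew : Walk G F u (l₁ ++ f :: l₄) w := walk_append hw1 ⟨hfF, Or.inr ⟨hs, hw4⟩⟩
      have hlen := hmin _ hnew
      rw [heq, heq2] at hlen
      simp only [List.length_append, List.length_cons] at hlen
      omega

/-! ### Cut edges and non-cut edges -/

def CutE (G : MDigraph) (e : G.E) : Prop :=
  ¬ G.Conn (Set.univ \ {e}) (G.src e) (G.tgt e)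

def NC (G : MDigraph) : Set G.E := {e | ¬ CutE G e}

lemma nc_subset {e : G.E} (he : CutE G e) : NC G ⊆ Set.univ \ {e} := by
  intro f hf
  refine mem_ds trivial ?_
  intro hfe
  subst hfe
  exact hf he

lemma key {e : G.E} (he : ¬ CutE G e) : G.Conn (NC G \ {e}) (G.src e) (G.tgt e) := by
  rw [CutE, not_not] at he
  obtain ⟨l, hl, hmin⟩ := exists_min_walk (conn_walk he)
  refine walk_conn (walk_sub hl ?_)
  intro f hf
  have hfm : f ∈ Set.univ \ {e} := walk_mem hl f hf
  have hfe : f ≠ e := fun h => hfm.2 h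
  refine mem_ds ?_ hfe
  intro hcut
  obtain ⟨l₁, l₂, x, h1, h2, hw1, hor⟩ := min_walk_once hl hmin hf
  have hc1 : G.Conn (Set.univ \ {f}) (G.src e) x :=
    walk_conn (walk_sub hw1 (fun g hg => mem_ds trivial (fun hgf => h1 (hgf ▸ hg))))
  have hce : G.Conn (Set.univ \ {f}) (G.src e) (G.tgt e) :=
    ReflTransGen.single ⟨e, mem_ds trivial (Ne.symm hfe), Or.inl ⟨rfl, rfl⟩⟩
  apply hcut
  rcases hor with ⟨hs, hw2⟩ | ⟨hs, hw2⟩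
  · have hc2 : G.Conn (Set.univ \ {f}) (G.tgt f) (G.tgt e) :=
      walk_conn (walk_sub hw2 (fun g hg => mem_ds trivial (fun hgf => h2 (hgf ▸ hg))))
    rw [← hs] at hc1
    exact (conn_symm hc1).trans (hce.trans (conn_symm hc2))
  · have hc2 : G.Conn (Set.univ \ {f}) (G.src f) (G.tgt e) :=
      walk_conn (walk_sub hw2 (fun g hg => mem_ds trivial (fun hgf => h2 (hgf ▸ hg))))
    rw [← hs] at hc1
    exact hc2.trans ((conn_symm hce).trans hc1)

/-! ### Counting components -/

lemma subgraph_restrict (H : Subgraph G) :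
    {e ∈ H.edges | G.src e ∈ H.verts ∧ G.tgt e ∈ H.verts} = H.edges := by
  ext e
  constructor
  · exact fun h => h.1
  · exact fun h => ⟨h, H.src_mem e h, H.tgt_mem e h⟩

def rel' (W : Set G.V) (F : Set G.E) : W → W → Prop :=
  fun u v => G.Step {e ∈ F | G.src e ∈ W ∧ G.tgt e ∈ W} u.1 v.1

lemma numComponents_def (W : Set G.V) (F : Set G.E) :
    G.numComponents W F = Nat.card (Quot (rel' W F)) := rfl

lemma quot_mk_eq_of_conn (W : Set G.V) (F : Set G.E) {u v : G.V} (hu : u ∈ W)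
    (h : G.Conn {e ∈ F | G.src e ∈ W ∧ G.tgt e ∈ W} u v) :
    ∃ hv : v ∈ W, Quot.mk (rel' W F) ⟨u, hu⟩ = Quot.mk (rel' W F) ⟨v, hv⟩ := by
  induction h with
  | refl => exact ⟨hu, rfl⟩
  | @tail b c h1 h2 ih =>
    obtain ⟨hb, hq⟩ := ih
    obtain ⟨e, he, hor⟩ := h2
    have hc : c ∈ W := by
      rcases hor with ⟨h3, h4⟩ | ⟨h3, h4⟩
      · exact h4 ▸ he.2.2
      · exact h3 ▸ he.2.1
    exact ⟨hc, hq.trans (Quot.sound ⟨e, he, hor⟩)⟩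

lemma conn_of_quot_mk_eq (W : Set G.V) (F : Set G.E) {u v : W}
    (h : Quot.mk (rel' W F) u = Quot.mk (rel' W F) v) :
    G.Conn {e ∈ F | G.src e ∈ W ∧ G.tgt e ∈ W} u.1 v.1 := by
  have h' := Quot.eq.1 h
  clear h
  induction h' with
  | rel a b hab => exact ReflTransGen.single hab
  | refl a => exact conn_refl
  | symm a b _ ih => exact conn_symm ih
  | trans a b c _ _ ih1 ih2 => exact ih1.trans ih2

lemma nc_eq_one_of (W : Set G.V) (F : Set G.E) (hne : W.Nonempty)
    (hconn : ∀ u ∈ W, ∀ v ∈ W, G.Conn {e ∈ F | G.src e ∈ W ∧ G.tgt e ∈ W} u v) :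
    G.numComponents W F = 1 := by
  rw [numComponents_def, Nat.card_eq_one_iff_unique]
  have hall : ∀ p q : W, Quot.mk (rel' W F) p = Quot.mk (rel' W F) q := by
    intro p q
    obtain ⟨hv, heq⟩ := quot_mk_eq_of_conn W F p.2 (hconn p.1 p.2 q.1 q.2)
    exact heq
  refine ⟨⟨fun p q => ?_⟩, ⟨Quot.mk _ ⟨hne.some, hne.some_mem⟩⟩⟩
  obtain ⟨p', rfl⟩ := Quot.exists_rep p
  obtain ⟨q', rfl⟩ := Quot.exists_rep q
  exact hall p' q'

lemma conn_of_nc_le_one (W : Set G.V) (F : Set G.E) (h : G.numComponents W F ≤ 1)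
    {u v : G.V} (hu : u ∈ W) (hv : v ∈ W) :
    G.Conn {e ∈ F | G.src e ∈ W ∧ G.tgt e ∈ W} u v := by
  rw [numComponents_def] at h
  haveI : Finite (Quot (rel' W F)) :=
    Finite.of_surjective (Quot.mk _) (fun q => Quot.exists_rep q)
  haveI : Nonempty (Quot (rel' W F)) := ⟨Quot.mk _ ⟨u, hu⟩⟩
  have hpos : 0 < Nat.card (Quot (rel' W F)) := Nat.card_pos
  have h1 : Nat.card (Quot (rel' W F)) = 1 := by omega
  have hsub := (Nat.card_eq_one_iff_unique.mp h1).1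
  exact conn_of_quot_mk_eq W F
    (Subsingleton.elim (Quot.mk (rel' W F) ⟨u, hu⟩) (Quot.mk (rel' W F) ⟨v, hv⟩))

lemma one_lt_nc_of (W : Set G.V) (F : Set G.E) {u v : G.V} (hu : u ∈ W) (hv : v ∈ W)
    (h : ¬ G.Conn {e ∈ F | G.src e ∈ W ∧ G.tgt e ∈ W} u v) :
    1 < G.numComponents W F := by
  rw [numComponents_def]
  haveI : Finite (Quot (rel' W F)) :=
    Finite.of_surjective (Quot.mk _) (fun q => Quot.exists_rep q)
  have hne : Quot.mk (rel' W F) ⟨u, hu⟩ ≠ Quot.mk (rel' W F) ⟨v, hv⟩ :=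
    fun heq => h (conn_of_quot_mk_eq W F heq)
  haveI : Nontrivial (Quot (rel' W F)) := ⟨_, _, hne⟩
  exact Finite.one_lt_card

lemma nc_eq_one (H : Subgraph G) (h : H.IsConnected) : H.numComponents = 1 := by
  have h2 : ∀ u ∈ H.verts, ∀ v ∈ H.verts,
      G.Conn {e ∈ H.edges | G.src e ∈ H.verts ∧ G.tgt e ∈ H.verts} u v := by
    rw [subgraph_restrict]
    exact h.2
  exact nc_eq_one_of H.verts H.edges h.1 h2

lemma conn_of_del_not_cut (H : Subgraph G) (hconn : H.IsConnected) {e : G.E}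
    (he : e ∈ H.edges) (hnc : ¬ H.IsCutEdge e) {u v : G.V}
    (hu : u ∈ H.verts) (hv : v ∈ H.verts) : G.Conn (H.edges \ {e}) u v := by
  have h1 : H.numComponents = 1 := nc_eq_one H hconn
  have h2 : (H.deleteEdge e).numComponents ≤ 1 := by
    by_contra h3
    exact hnc ⟨he, by rw [h1]; omega⟩
  have h4 := conn_of_nc_le_one (H.deleteEdge e).verts (H.deleteEdge e).edges h2 hu hv
  rw [subgraph_restrict (H.deleteEdge e)] at h4
  exact h4

lemma not_cut_subgraph (H : Subgraph G) (hconn : H.IsConnected) (e : G.E)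
    (hdel : ∀ u ∈ H.verts, ∀ v ∈ H.verts, G.Conn (H.edges \ {e}) u v) :
    ¬ H.IsCutEdge e := by
  intro hce
  obtain ⟨_, hlt⟩ := hce
  have h1 : H.numComponents = 1 := nc_eq_one H hconn
  have h2 : (H.deleteEdge e).numComponents = 1 := nc_eq_one _ ⟨hconn.1, hdel⟩
  rw [h1, h2] at hlt
  omega

lemma conn_avoid {e : G.E} (c : G.Conn (Set.univ \ {e}) (G.src e) (G.tgt e))
    {u v : G.V} (h : G.Conn Set.univ u v) : G.Conn (Set.univ \ {e}) u v := by
  induction h with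
  | refl => exact conn_refl
  | @tail b d _ h2 ih =>
    obtain ⟨f, _, hor⟩ := h2
    by_cases hfe : f = e
    · subst hfe
      rcases hor with ⟨h3, h4⟩ | ⟨h3, h4⟩
      · exact ih.trans (h3 ▸ h4 ▸ c)
      · exact ih.trans (h3 ▸ h4 ▸ conn_symm c)
    · exact ih.tail ⟨f, mem_ds trivial hfe, hor⟩

lemma isCutEdge_top_iff (hG : ∀ u v : G.V, G.Conn Set.univ u v) (e : G.E) :
    (top G).IsCutEdge e ↔ CutE G e := by
  constructor
  · intro h
    by_contra hnc
    rw [CutE, not_not] at hnc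
    refine not_cut_subgraph (top G) ⟨⟨G.src e, trivial⟩, fun u _ v _ => hG u v⟩ e ?_ h
    intro u _ v _
    exact conn_avoid hnc (hG u v)
  · intro hc
    refine ⟨trivial, ?_⟩
    have h1 : (top G).numComponents = 1 :=
      nc_eq_one _ ⟨⟨G.src e, trivial⟩, fun u _ v _ => hG u v⟩
    have h2 : 1 < ((top G).deleteEdge e).numComponents := by
      refine one_lt_nc_of _ _ (u := G.src e) (v := G.tgt e) trivial trivial ?_
      rw [subgraph_restrict ((top G).deleteEdge e)]
      exact hc
    rw [h1]
    exact h2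

/-! ### The blob of a vertex -/

def comp (G : MDigraph) (m : G.V) : Set G.V := {u | G.Conn (NC G) m u}

def blob (G : MDigraph) (m : G.V) : Subgraph G where
  verts := comp G m
  edges := {e | e ∈ NC G ∧ G.src e ∈ comp G m}
  src_mem := fun e he => he.2
  tgt_mem := fun e he => Relation.ReflTransGen.tail he.2 ⟨e, he.1, Or.inl ⟨rfl, rfl⟩⟩

lemma comp_conn {m u : G.V} (hu : G.Conn (NC G) m u) : G.Conn (blob G m).edges m u := by
  induction hu with
  | refl => exact conn_refl
  | @tail b c h1 h2 ih =>
    obtain ⟨e, he, hor⟩ := h2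
    have hb : b ∈ comp G m := h1
    have hc : c ∈ comp G m := h1.tail ⟨e, he, hor⟩
    have hsrc : G.src e ∈ comp G m := by
      rcases hor with ⟨h3, _⟩ | ⟨h3, _⟩
      · exact h3.symm ▸ hb
      · exact h3.symm ▸ hc
    exact ih.tail ⟨e, ⟨he, hsrc⟩, hor⟩

lemma blob_connected (m : G.V) : (blob G m).IsConnected :=
  ⟨⟨m, conn_refl⟩, fun u hu v hv => (conn_symm (comp_conn hu)).trans (comp_conn hv)⟩

lemma comp_conn_del {m : G.V} {e : G.E} (he : e ∈ (blob G m).edges) {u : G.V}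
    (hu : G.Conn (NC G) m u) : G.Conn ((blob G m).edges \ {e}) m u := by
  have kc : G.Conn (NC G \ {e}) (G.src e) (G.tgt e) := key he.1
  have step1 : G.Conn (NC G \ {e}) m u := by
    induction hu with
    | refl => exact conn_refl
    | @tail b c _ h2 ih =>
      obtain ⟨f, hf, hor⟩ := h2
      by_cases hfe : f = e
      · subst hfe
        rcases hor with ⟨h3, h4⟩ | ⟨h3, h4⟩
        · exact ih.trans (h3 ▸ h4 ▸ kc)
        · exact ih.trans (h3 ▸ h4 ▸ conn_symm kc)
      · exact ih.tail ⟨f, mem_ds hf hfe, hor⟩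
  clear hu
  induction step1 with
  | refl => exact conn_refl
  | @tail b c h1 h2 ih =>
    obtain ⟨f, hf, hor⟩ := h2
    have hb : b ∈ comp G m := conn_mono Set.diff_subset h1
    have hbc : G.Conn (NC G) m c :=
      Relation.ReflTransGen.tail (conn_mono Set.diff_subset h1) ⟨f, hf.1, hor⟩
    have hc : c ∈ comp G m := hbc
    have hsrc : G.src f ∈ comp G m := by
      rcases hor with ⟨h3, _⟩ | ⟨h3, _⟩
      · exact h3.symm ▸ hb
      · exact h3.symm ▸ hc
    exact ih.tail ⟨f, ⟨⟨hf.1, hsrc⟩, hf.2⟩, hor⟩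

lemma blob_no_cut (m : G.V) : ∀ e, ¬ (blob G m).IsCutEdge e := by
  intro e hce
  have he := hce.1
  refine not_cut_subgraph _ (blob_connected m) e ?_ hce
  intro u hu v hv
  exact (conn_symm (comp_conn_del he hu)).trans (comp_conn_del he hv)

lemma blob_max (m : G.V) (B' : Subgraph G) (hconn' : B'.IsConnected)
    (hnocut' : ∀ e, ¬ B'.IsCutEdge e) (hle : (blob G m).le B') : B'.le (blob G m) := by
  have hm : m ∈ B'.verts := hle.1 conn_refl
  have hedges' : B'.edges ⊆ NC G := by
    intro e he
    intro hcute
    apply hcute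
    have h3 := conn_of_del_not_cut B' hconn' he (hnocut' e) (B'.src_mem e he) (B'.tgt_mem e he)
    have hsub : B'.edges \ {e} ⊆ Set.univ \ {e} := fun f hf => mem_ds trivial hf.2
    exact conn_mono hsub h3
  have hverts : B'.verts ⊆ comp G m := by
    intro u hu
    exact conn_mono hedges' (hconn'.2 m hm u hu)
  refine ⟨hverts, ?_⟩
  intro e he
  exact ⟨hedges' he, hverts (B'.src_mem e he)⟩

lemma blob_isBlob (m : G.V) : IsBlobIn (top G) (blob G m) :=
  ⟨⟨Set.subset_univ _, Set.subset_univ _⟩, blob_connected m, blob_no_cut m,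
    fun B' _ hconn' hnocut' hle => blob_max m B' hconn' hnocut' hle⟩

/-! ### Exit edges -/

lemma walk_exit (S : Set G.V) {F : Set G.E} :
    ∀ (l : List G.E) (u w : G.V), Walk G F u l w → w ∉ S →
      (∃ e x y, e ∈ F ∧ ((G.src e = x ∧ G.tgt e = y) ∨ (G.src e = y ∧ G.tgt e = x)) ∧
          x ∈ S ∧ y ∉ S ∧ G.Conn (F \ {e}) y w) ∨
        (u ∉ S ∧ G.Conn {e ∈ F | G.src e ∉ S ∧ G.tgt e ∉ S} u w) := by
  intro l
  induction l with
  | nil =>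
    intro u w hw hnS
    cases hw
    exact Or.inr ⟨hnS, conn_refl⟩
  | cons e l ih =>
    intro u w hw hnS
    obtain ⟨heF, hor⟩ := hw
    rcases hor with ⟨hs, hwl⟩ | ⟨hs, hwl⟩
    · rcases ih _ _ hwl hnS with hexit | ⟨hvnS, hc⟩
      · exact Or.inl hexit
      · by_cases huS : u ∈ S
        · refine Or.inl ⟨e, u, G.tgt e, heF, Or.inl ⟨hs, rfl⟩, huS, hvnS, ?_⟩
          refine conn_mono ?_ hc
          intro f hf
          refine mem_ds hf.1 ?_
          intro hfe; subst hfe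
          exact hf.2.1 (hs.symm ▸ huS)
        · exact Or.inr ⟨huS,
            ReflTransGen.head ⟨e, ⟨heF, hs.symm ▸ huS, hvnS⟩, Or.inl ⟨hs, rfl⟩⟩ hc⟩
    · rcases ih _ _ hwl hnS with hexit | ⟨hvnS, hc⟩
      · exact Or.inl hexit
      · by_cases huS : u ∈ S
        · refine Or.inl ⟨e, u, G.src e, heF, Or.inr ⟨rfl, hs⟩, huS, hvnS, ?_⟩
          refine conn_mono ?_ hc
          intro f hf
          refine mem_ds hf.1 ?_
          intro hfe; subst hfe
          exact hf.2.2 (hs.symm ▸ huS)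
        · exact Or.inr ⟨huS,
            ReflTransGen.head ⟨e, ⟨heF, hvnS, hs.symm ▸ huS⟩, Or.inr ⟨rfl, hs⟩⟩ hc⟩

/-! ### Sides of a cut edge, laminarity, medians -/

lemma side_of (hG : ∀ u v : G.V, G.Conn Set.univ u v) (f : G.E) (u : G.V) :
    G.Conn (Set.univ \ {f}) u (G.src f) ∨ G.Conn (Set.univ \ {f}) u (G.tgt f) := by
  have h := hG u (G.src f)
  induction h using Relation.ReflTransGen.head_induction_on with
  | refl => exact Or.inl conn_refl
  | head h1 h2 ih =>
    obtain ⟨e, _, hor⟩ := h1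
    by_cases hef : e = f
    · subst hef
      rcases hor with ⟨h3, _⟩ | ⟨_, h3⟩
      · subst h3; exact Or.inl conn_refl
      · subst h3; exact Or.inr conn_refl
    · rcases ih with hl | hl
      · exact Or.inl (ReflTransGen.head ⟨e, mem_ds trivial hef, hor⟩ hl)
      · exact Or.inr (ReflTransGen.head ⟨e, mem_ds trivial hef, hor⟩ hl)

lemma laminar {f g : G.E} (hgf : g ≠ f) {z : G.V}
    (hz : ¬ G.Conn (Set.univ \ {f}) (G.src g) z) {u : G.V}
    (h : G.Conn (Set.univ \ {f}) u z) : G.Conn (Set.univ \ {g}) u z := by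
  induction h using Relation.ReflTransGen.head_induction_on with
  | refl => exact conn_refl
  | head h1 h2 ih =>
    obtain ⟨e, he, hor⟩ := h1
    by_cases heg : e = g
    · subst heg
      exfalso
      apply hz
      rcases hor with ⟨h3, h4⟩ | ⟨h3, h4⟩
      · subst h3; exact ReflTransGen.head ⟨e, he, Or.inl ⟨rfl, h4⟩⟩ h2
      · subst h3; exact h2
    · exact ReflTransGen.head ⟨e, mem_ds trivial heg, hor⟩ ih

def InMaj (G : MDigraph) (v₁ v₂ v₃ : G.V) (f : G.E) (u : G.V) : Prop :=
  (G.Conn (Set.univ \ {f}) u v₁ ∧ G.Conn (Set.univ \ {f}) u v₂) ∨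
  (G.Conn (Set.univ \ {f}) u v₁ ∧ G.Conn (Set.univ \ {f}) u v₃) ∨
  (G.Conn (Set.univ \ {f}) u v₂ ∧ G.Conn (Set.univ \ {f}) u v₃)

def BadS (G : MDigraph) (v₁ v₂ v₃ : G.V) (u : G.V) : Set G.E :=
  {f | CutE G f ∧ ¬ InMaj G v₁ v₂ v₃ f u}

lemma exists_median (hG : ∀ u v : G.V, G.Conn Set.univ u v) (v₁ v₂ v₃ : G.V) :
    ∃ m, ∀ f, CutE G f → InMaj G v₁ v₂ v₃ f m := by
  classical
  suffices h : ∀ (n : ℕ) (u : G.V), (BadS G v₁ v₂ v₃ u).ncard ≤ n →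
      ∃ m, ∀ f, CutE G f → InMaj G v₁ v₂ v₃ f m from h _ v₁ le_rfl
  intro n
  induction n with
  | zero =>
    intro u hu
    refine ⟨u, fun f hf => ?_⟩
    by_contra hn
    have hmem : f ∈ BadS G v₁ v₂ v₃ u := ⟨hf, hn⟩
    have hemp : BadS G v₁ v₂ v₃ u = ∅ :=
      (Set.ncard_eq_zero (Set.toFinite _)).mp (Nat.le_zero.mp hu)
    rw [hemp] at hmem
    exact hmem
  | succ n ih =>
    intro u hu
    by_cases hemp : BadS G v₁ v₂ v₃ u = ∅
    · refine ⟨u, fun f hf => ?_⟩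
      by_contra hn
      have hmem : f ∈ BadS G v₁ v₂ v₃ u := ⟨hf, hn⟩
      rw [hemp] at hmem
      exact hmem
    · obtain ⟨f, hfmem⟩ := Set.nonempty_iff_ne_empty.mpr hemp
      obtain ⟨hcut, hnmaj⟩ := hfmem
      obtain ⟨z₀, z₁, hends, hu0⟩ :
          ∃ z₀ z₁, ((G.src f = z₀ ∧ G.tgt f = z₁) ∨ (G.src f = z₁ ∧ G.tgt f = z₀)) ∧
            G.Conn (Set.univ \ {f}) u z₀ := by
        rcases side_of hG f u with h | h
        · exact ⟨G.src f, G.tgt f, Or.inl ⟨rfl, rfl⟩, h⟩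
        · exact ⟨G.tgt f, G.src f, Or.inr ⟨rfl, rfl⟩, h⟩
      have hsep : ¬ G.Conn (Set.univ \ {f}) z₀ z₁ := by
        rcases hends with ⟨h1, h2⟩ | ⟨h1, h2⟩
        · rw [← h1, ← h2]; exact hcut
        · rw [← h1, ← h2]; exact fun hcc => hcut (conn_symm hcc)
      have hside0 : ∀ w : G.V,
          G.Conn (Set.univ \ {f}) w z₀ ∨ G.Conn (Set.univ \ {f}) w z₁ := by
        intro w
        rcases hends with ⟨h1, h2⟩ | ⟨h1, h2⟩
        · rw [← h1, ← h2]; exact side_of hG f w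
        · rw [← h1, ← h2]; exact (side_of hG f w).symm
      have hstep10 : ∀ g : G.E, g ≠ f → G.Step (Set.univ \ {g}) z₁ z₀ := by
        intro g hfg
        refine ⟨f, mem_ds trivial (Ne.symm hfg), ?_⟩
        rcases hends with ⟨h1, h2⟩ | ⟨h1, h2⟩
        · exact Or.inr ⟨h1, h2⟩
        · exact Or.inl ⟨h1, h2⟩
      have hPP : (G.Conn (Set.univ \ {f}) v₁ z₁ ∧ G.Conn (Set.univ \ {f}) v₂ z₁) ∨
          (G.Conn (Set.univ \ {f}) v₁ z₁ ∧ G.Conn (Set.univ \ {f}) v₃ z₁) ∨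
          (G.Conn (Set.univ \ {f}) v₂ z₁ ∧ G.Conn (Set.univ \ {f}) v₃ z₁) := by
        have hmk : ∀ {p : G.V}, G.Conn (Set.univ \ {f}) p z₀ → G.Conn (Set.univ \ {f}) u p :=
          fun hp => hu0.trans (conn_symm hp)
        rcases hside0 v₁ with h1 | h1 <;> rcases hside0 v₂ with h2 | h2 <;>
          rcases hside0 v₃ with h3 | h3
        · exact absurd (Or.inl ⟨hmk h1, hmk h2⟩) hnmaj
        · exact absurd (Or.inl ⟨hmk h1, hmk h2⟩) hnmaj
        · exact absurd (Or.inr (Or.inl ⟨hmk h1, hmk h3⟩)) hnmaj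
        · exact Or.inr (Or.inr ⟨h2, h3⟩)
        · exact absurd (Or.inr (Or.inr ⟨hmk h2, hmk h3⟩)) hnmaj
        · exact Or.inr (Or.inl ⟨h1, h3⟩)
        · exact Or.inl ⟨h1, h2⟩
        · exact Or.inl ⟨h1, h2⟩
      have hmaj1 : InMaj G v₁ v₂ v₃ f z₁ := by
        rcases hPP with ⟨h1, h2⟩ | ⟨h1, h2⟩ | ⟨h1, h2⟩
        · exact Or.inl ⟨conn_symm h1, conn_symm h2⟩
        · exact Or.inr (Or.inl ⟨conn_symm h1, conn_symm h2⟩)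
        · exact Or.inr (Or.inr ⟨conn_symm h1, conn_symm h2⟩)
      have hsub : BadS G v₁ v₂ v₃ z₁ ⊆ BadS G v₁ v₂ v₃ u \ {f} := by
        intro g hg
        obtain ⟨hgcut, hgnm⟩ := hg
        have hgf : g ≠ f := fun h => hgnm (h ▸ hmaj1)
        refine ⟨⟨hgcut, ?_⟩, hgf⟩
        intro hmaju
        apply hgnm
        rcases hside0 (G.src g) with hg0 | hg1
        · have hz' : ¬ G.Conn (Set.univ \ {f}) (G.src g) z₁ :=
            fun h => hsep ((conn_symm hg0).trans h)
          have htr : ∀ {p : G.V},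
              G.Conn (Set.univ \ {f}) p z₁ → G.Conn (Set.univ \ {g}) z₁ p :=
            fun hp => conn_symm (laminar hgf hz' hp)
          rcases hPP with ⟨h1, h2⟩ | ⟨h1, h2⟩ | ⟨h1, h2⟩
          · exact Or.inl ⟨htr h1, htr h2⟩
          · exact Or.inr (Or.inl ⟨htr h1, htr h2⟩)
          · exact Or.inr (Or.inr ⟨htr h1, htr h2⟩)
        · have hz' : ¬ G.Conn (Set.univ \ {f}) (G.src g) z₀ :=
            fun h => hsep ((conn_symm h).trans hg1)
          have hu' : G.Conn (Set.univ \ {g}) u z₀ := laminar hgf hz' hu0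
          have hz1u : G.Conn (Set.univ \ {g}) z₁ u :=
            (ReflTransGen.single (hstep10 g hgf)).trans (conn_symm hu')
          rcases hmaju with ⟨h1, h2⟩ | ⟨h1, h2⟩ | ⟨h1, h2⟩
          · exact Or.inl ⟨hz1u.trans h1, hz1u.trans h2⟩
          · exact Or.inr (Or.inl ⟨hz1u.trans h1, hz1u.trans h2⟩)
          · exact Or.inr (Or.inr ⟨hz1u.trans h1, hz1u.trans h2⟩)
      have hflt : f ∈ BadS G v₁ v₂ v₃ u := ⟨hcut, hnmaj⟩
      have hss : BadS G v₁ v₂ v₃ z₁ ⊂ BadS G v₁ v₂ v₃ u :=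
        Set.ssubset_iff_subset_ne.mpr ⟨hsub.trans Set.diff_subset,
          fun heq => (hsub (heq ▸ hflt)).2 rfl⟩
      have hlt := Set.ncard_lt_ncard hss (Set.toFinite _)
      exact ih z₁ (by omega)

/-! ### Pendant vertices (leaves) -/

lemma no_src_of_outDeg_zero {v : G.V} (h : G.outDeg v = 0) (e : G.E) : G.src e ≠ v := by
  intro he
  have hie : IsEmpty {e : G.E // G.src e = v} := by
    rcases Nat.card_eq_zero.mp h with h' | h'
    · exact h'
    · exact absurd h' (not_infinite_iff_finite.mpr inferInstance)
  exact hie.false ⟨e, he⟩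

lemma pendant_of_inDeg_one {v : G.V} (h : G.inDeg v = 1) :
    ∃ f : G.E, G.tgt f = v ∧ ∀ e, G.tgt e = v → e = f := by
  have h2 := Nat.card_eq_one_iff_unique.mp h
  obtain ⟨⟨f, hf⟩⟩ := h2.2
  haveI := h2.1
  refine ⟨f, hf, fun e he => ?_⟩
  have h3 : (⟨e, he⟩ : {e : G.E // G.tgt e = v}) = ⟨f, hf⟩ := Subsingleton.elim _ _
  exact congrArg Subtype.val h3

lemma pendant_isolated {v : G.V} (hout : ∀ e, G.src e ≠ v) {f : G.E}
    (hpend : ∀ e, G.tgt e = v → e = f) {F : Set G.E} (hfF : f ∉ F) {z : G.V}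
    (h : G.Conn F v z) : z = v := by
  rcases Relation.ReflTransGen.cases_head h with heq | ⟨c, hstep, _⟩
  · exact heq.symm
  · obtain ⟨e, heF, hor⟩ := hstep
    rcases hor with ⟨h1, _⟩ | ⟨_, h1⟩
    · exact absurd h1 (hout e)
    · exact absurd ((hpend e h1) ▸ heF) hfF

lemma pendant_cut {v : G.V} (hout : ∀ e, G.src e ≠ v) {f : G.E}
    (hft : G.tgt f = v) (hpend : ∀ e, G.tgt e = v → e = f) : CutE G f := by
  intro hconn
  rw [hft] at hconn
  have hs := pendant_isolated hout hpend (F := Set.univ \ {f})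
    (fun hm => hm.2 rfl) (conn_symm hconn)
  exact hout f hs

lemma not_in_comp {m v : G.V} (hout : ∀ e, G.src e ≠ v) {f : G.E}
    (hft : G.tgt f = v) (hpend : ∀ e, G.tgt e = v → e = f)
    (h2 : ∃ w, w ≠ v ∧ G.Conn (Set.univ \ {f}) m w) : v ∉ comp G m := by
  have hcut : CutE G f := pendant_cut hout hft hpend
  intro hv
  have hv' : G.Conn (NC G) m v := hv
  by_cases hmv : m = v
  · subst hmv
    obtain ⟨w, hw, hc⟩ := h2
    exact hw (pendant_isolated hout hpend (fun hm => hm.2 rfl) hc)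
  · rcases Relation.ReflTransGen.cases_head (conn_symm hv') with heq | ⟨c, hstep, _⟩
    · exact hmv heq.symm
    · obtain ⟨e, heNC, hor⟩ := hstep
      rcases hor with ⟨h3, _⟩ | ⟨_, h3⟩
      · exact hout e h3
      · exact heNC ((hpend e h3).symm ▸ hcut)

/-! ### The main separation lemma -/

lemma pair_not_conn (hG : ∀ u v : G.V, G.Conn Set.univ u v) (m : G.V)
    (v₁ v₂ v₃ : G.V) (h12 : v₁ ≠ v₂) (h13 : v₁ ≠ v₃) (h23 : v₂ ≠ v₃)
    (hmed : ∀ f, CutE G f → InMaj G v₁ v₂ v₃ f m)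
    (ls lt : G.V) (hls : ls = v₁ ∨ ls = v₂ ∨ ls = v₃)
    (hlt : lt = v₁ ∨ lt = v₂ ∨ lt = v₃) (hlst : ls ≠ lt)
    (hout : ∀ e, G.src e ≠ ls) (fs : G.E) (hft : G.tgt fs = ls)
    (hpend : ∀ e, G.tgt e = ls → e = fs) :
    ¬ G.Conn {e ∈ (top G).edges | ¬ IncidentCut (top G) (blob G m) e} ls lt := by
  classical
  intro hK
  have hcfs : CutE G fs := pendant_cut hout hft hpend
  have h2 : ∃ w, w ≠ ls ∧ G.Conn (Set.univ \ {fs}) m w := by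
    rcases hmed fs hcfs with ⟨ha, hb⟩ | ⟨ha, hb⟩ | ⟨ha, hb⟩
    · by_cases h : v₁ = ls
      · exact ⟨v₂, fun hh => h12 (h.trans hh.symm), hb⟩
      · exact ⟨v₁, h, ha⟩
    · by_cases h : v₁ = ls
      · exact ⟨v₃, fun hh => h13 (h.trans hh.symm), hb⟩
      · exact ⟨v₁, h, ha⟩
    · by_cases h : v₂ = ls
      · exact ⟨v₃, fun hh => h23 (h.trans hh.symm), hb⟩
      · exact ⟨v₂, h, ha⟩
  have hnotin : ls ∉ comp G m := not_in_comp hout hft hpend h2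
  obtain ⟨l, hl⟩ := conn_walk (hG m ls)
  rcases walk_exit (comp G m) l m ls hl hnotin with hex | ⟨hm, _⟩
  · obtain ⟨e, x, y, _, hends, hxC, hynC, hyconn⟩ := hex
    have hcute : CutE G e := by
      by_contra hnc
      have hxc : G.Conn (NC G) m x := hxC
      exact hynC (hxc.tail ⟨e, hnc, hends⟩)
    have hmx : G.Conn (Set.univ \ {e}) m x := conn_mono (nc_subset hcute) hxC
    have hxy : ¬ G.Conn (Set.univ \ {e}) x y := by
      rcases hends with ⟨h3, h4⟩ | ⟨h3, h4⟩
      · rw [← h3, ← h4]; exact hcute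
      · rw [← h3, ← h4]; exact fun hc => hcute (conn_symm hc)
    have hnot_ms : ¬ G.Conn (Set.univ \ {e}) m ls := by
      intro h
      exact hxy ((conn_symm hmx).trans (h.trans (conn_symm hyconn)))
    have hmt : G.Conn (Set.univ \ {e}) m lt := by
      have hmaj := hmed e hcute
      rcases hls with rfl | rfl | rfl <;> rcases hlt with rfl | rfl | rfl <;>
        first
          | exact absurd rfl hlst
          | (rcases hmaj with ⟨ha, hb⟩ | ⟨ha, hb⟩ | ⟨ha, hb⟩ <;>
              first
                | exact ha
                | exact hb
                | exact absurd ha hnot_ms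
                | exact absurd hb hnot_ms)
    have hinc : IncidentCut (top G) (blob G m) e := by
      refine ⟨(isCutEdge_top_iff hG e).mpr hcute, ?_⟩
      rcases hends with ⟨h3, h4⟩ | ⟨h3, h4⟩
      · exact Or.inl ⟨h3.symm ▸ hxC, fun hc => hynC (h4 ▸ hc)⟩
      · exact Or.inr ⟨h4.symm ▸ hxC, fun hc => hynC (h3 ▸ hc)⟩
    have hsub : {e' ∈ (top G).edges | ¬ IncidentCut (top G) (blob G m) e'} ⊆
        Set.univ \ {e} := by
      intro f hf
      refine mem_ds trivial ?_
      intro hfe; subst hfe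
      exact hf.2 hinc
    exact hnot_ms (hmt.trans (conn_symm (conn_mono hsub hK)))
  · exact hm conn_refl

end Stmt9

end Stmt9Aux
/-- Let `N⁺` be a rooted binary phylogenetic network on a taxon set `X` with
`|X| ≥ 3` (witnessed by three distinct taxa).  Then every 3-element subset of
`X` determines a blob of `N⁺`. -/
theorem stmt_9 {X : Type} (N : PhyloNetwork X) (a b c : X)
    (hab : a ≠ b) (hac : a ≠ c) (hbc : b ≠ c) :
    ∃ B : Subgraph N.toMDigraph, IsBlobIn (top N.toMDigraph) B ∧
      DeterminesIn (top N.toMDigraph) B N.leaf ({a, b, c} : Set X) := by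
  classical
  have hG : ∀ u v : N.toMDigraph.V, N.toMDigraph.Conn Set.univ u v := N.conn
  obtain ⟨m, hmed⟩ := Stmt9.exists_median hG (N.leaf a) (N.leaf b) (N.leaf c)
  refine ⟨Stmt9.blob N.toMDigraph m, Stmt9.blob_isBlob m, ?_⟩
  intro s hs t ht hst
  simp only [Set.mem_insert_iff, Set.mem_singleton_iff] at hs ht
  have h12 : N.leaf a ≠ N.leaf b := fun h => hab (N.leaf_inj h)
  have h13 : N.leaf a ≠ N.leaf c := fun h => hac (N.leaf_inj h)
  have h23 : N.leaf b ≠ N.leaf c := fun h => hbc (N.leaf_inj h)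
  obtain ⟨fs, hft, hpend⟩ := Stmt9.pendant_of_inDeg_one (N.leaf_in s)
  have hout : ∀ e, N.toMDigraph.src e ≠ N.leaf s :=
    fun e => Stmt9.no_src_of_outDeg_zero (N.leaf_out s) e
  have hls : N.leaf s = N.leaf a ∨ N.leaf s = N.leaf b ∨ N.leaf s = N.leaf c := by
    rcases hs with rfl | rfl | rfl
    exacts [Or.inl rfl, Or.inr (Or.inl rfl), Or.inr (Or.inr rfl)]
  have hlt : N.leaf t = N.leaf a ∨ N.leaf t = N.leaf b ∨ N.leaf t = N.leaf c := by
    rcases ht with rfl | rfl | rfl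
    exacts [Or.inl rfl, Or.inr (Or.inl rfl), Or.inr (Or.inr rfl)]
  exact Stmt9.pair_not_conn hG m _ _ _ h12 h13 h23 hmed (N.leaf s) (N.leaf t) hls hlt
    (fun h => hst (N.leaf_inj h)) hout fs hft hpend
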